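/- For all real w and x, (1/√2)·V_0(|w−x|/√2)·(1/V_0(w) + 1/V_0(x)) ≥ 1. -/

import Mathlib

open MeasureTheory Set Filter Topology

noncomputable def V0 (x : ℝ) : ℝ := ∫ u in Set.Ioi (0:ℝ), Real.exp (-u) / Real.sqrt (x^2 + u)

lemma integrableOn_gamma_half :
    IntegrableOn (fun u : ℝ => Real.exp (-u) * u ^ (-(1:ℝ)/2)) (Ioi 0) := by
  have h := Real.GammaIntegral_convergent (s := 1/2) (by norm_num)
  convert h using 2
  norm_num

lemma contOn_V0 (x : ℝ) :
    ContinuousOn (fun u : ℝ => Real.exp (-u) / Real.sqrt (x^2 + u)) (Ioi 0) := by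
  apply ContinuousOn.div
  · fun_prop
  · fun_prop
  · intro u hu
    have hu' : (0:ℝ) < u := hu
    have : (0:ℝ) < x^2 + u := by positivity
    exact ne_of_gt (Real.sqrt_pos.mpr this)

lemma integrableOn_V0 (x : ℝ) :
    IntegrableOn (fun u : ℝ => Real.exp (-u) / Real.sqrt (x^2 + u)) (Ioi 0) := by
  apply Integrable.mono integrableOn_gamma_half
    ((contOn_V0 x).aestronglyMeasurable measurableSet_Ioi)
  rw [ae_restrict_iff' measurableSet_Ioi]
  filter_upwards with u hu
  have hu' : (0:ℝ) < u := hu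
  have h1 : Real.sqrt u ≤ Real.sqrt (x^2 + u) := Real.sqrt_le_sqrt (by nlinarith)
  have h2 : (0:ℝ) < Real.sqrt u := Real.sqrt_pos.mpr hu'
  have hrw : u ^ (-(1:ℝ)/2) = 1 / Real.sqrt u := by
    rw [Real.sqrt_eq_rpow, show (-1/2 : ℝ) = -(1/2) by norm_num, Real.rpow_neg hu'.le]
    exact (one_div _).symm
  rw [Real.norm_eq_abs, Real.norm_eq_abs, abs_of_nonneg (by positivity),
    abs_of_nonneg (by positivity), hrw, mul_one_div]
  gcongr

lemma hasDerivAt_aux (x c u : ℝ) (hu : 0 < u) (hc : 0 < c) :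
    HasDerivAt (fun v : ℝ => -(Real.exp (-v) * (Real.sqrt (x^2+v+c) - Real.sqrt (x^2+v))))
      (Real.exp (-u) * ((Real.sqrt (x^2+u+c) - Real.sqrt (x^2+u))
        - (1/(2*Real.sqrt (x^2+u+c)) - 1/(2*Real.sqrt (x^2+u))))) u := by
  have hA : (0:ℝ) < x^2+u := by positivity
  have hAc : (0:ℝ) < x^2+u+c := by positivity
  have he : HasDerivAt (fun v : ℝ => Real.exp (-v)) (-Real.exp (-u)) u := by
    simpa [Function.comp_def] using (Real.hasDerivAt_exp (-u)).comp u ((hasDerivAt_id u).neg)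
  have hin1 : HasDerivAt (fun v : ℝ => x^2+v+c) 1 u := by
    simpa using (((hasDerivAt_id u).const_add (x^2)).add_const c)
  have hin2 : HasDerivAt (fun v : ℝ => x^2+v) 1 u := by
    simpa using ((hasDerivAt_id u).const_add (x^2))
  have hs1 : HasDerivAt (fun v : ℝ => Real.sqrt (x^2+v+c)) (1/(2*Real.sqrt (x^2+u+c))) u := by
    simpa [Function.comp_def] using (Real.hasDerivAt_sqrt (ne_of_gt hAc)).comp u hin1
  have hs2 : HasDerivAt (fun v : ℝ => Real.sqrt (x^2+v)) (1/(2*Real.sqrt (x^2+u))) u := by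
    simpa [Function.comp_def] using (Real.hasDerivAt_sqrt (ne_of_gt hA)).comp u hin2
  have h := (he.mul (hs1.sub hs2)).neg
  refine h.congr_deriv ?_
  simp only [Pi.sub_apply]
  ring

lemma contOn_aux (x c : ℝ) (hc : 0 ≤ c) :
    ContinuousOn (fun u : ℝ => Real.exp (-u) * ((Real.sqrt (x^2+u+c) - Real.sqrt (x^2+u))
      - (1/(2*Real.sqrt (x^2+u+c)) - 1/(2*Real.sqrt (x^2+u))))) (Ioi 0) := by
  have hc1 : ∀ u ∈ Ioi (0:ℝ), Real.sqrt (x^2+u) ≠ 0 := by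
    intro u hu
    have hu' : (0:ℝ) < u := hu
    exact ne_of_gt (Real.sqrt_pos.mpr (by positivity))
  apply ContinuousOn.mul (by fun_prop)
  apply ContinuousOn.sub (by fun_prop)
  apply ContinuousOn.sub
  · apply ContinuousOn.div (by fun_prop) (by fun_prop)
    intro u hu
    have hu' : (0:ℝ) < u := hu
    have : (0:ℝ) < Real.sqrt (x^2+u+c) := Real.sqrt_pos.mpr (by nlinarith [sq_nonneg x])
    exact ne_of_gt (by linarith)
  · apply ContinuousOn.div (by fun_prop) (by fun_prop)
    intro u hu
    have hu' : (0:ℝ) < u := hu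
    have : (0:ℝ) < Real.sqrt (x^2+u) := Real.sqrt_pos.mpr (by positivity)
    exact ne_of_gt (by linarith)

lemma integrable_aux (x c : ℝ) (hc : 1 ≤ c) :
    IntegrableOn (fun u : ℝ => Real.exp (-u) * ((Real.sqrt (x^2+u+c) - Real.sqrt (x^2+u))
      - (1/(2*Real.sqrt (x^2+u+c)) - 1/(2*Real.sqrt (x^2+u))))) (Ioi 0) := by
  have hc0 : (0:ℝ) < c := by linarith
  have hD : IntegrableOn
      (fun u : ℝ => Real.sqrt c * Real.exp (-u) + Real.exp (-u) * u ^ (-(1:ℝ)/2)) (Ioi 0) := by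
    apply Integrable.add _ integrableOn_gamma_half
    have := exp_neg_integrableOn_Ioi (0:ℝ) (b := 1) one_pos
    simpa using this.const_mul (Real.sqrt c)
  apply Integrable.mono hD ((contOn_aux x c hc0.le).aestronglyMeasurable measurableSet_Ioi)
  rw [ae_restrict_iff' measurableSet_Ioi]
  filter_upwards with u hu
  have hu' : (0:ℝ) < u := hu
  have hA : (0:ℝ) < x^2+u := by positivity
  have hAc : (0:ℝ) < x^2+u+c := by positivity
  set s := Real.sqrt (x^2+u) with hs_def
  set t := Real.sqrt (x^2+u+c) with ht_def
  have hs : 0 < s := Real.sqrt_pos.mpr hA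
  have ht : 0 < t := Real.sqrt_pos.mpr hAc
  have hs2 : s^2 = x^2+u := Real.sq_sqrt hA.le
  have ht2 : t^2 = x^2+u+c := Real.sq_sqrt hAc.le
  have hts : s ≤ t := Real.sqrt_le_sqrt (by linarith)
  have hr : (0:ℝ) ≤ Real.sqrt c := Real.sqrt_nonneg c
  have hr2 : (Real.sqrt c)^2 = c := Real.sq_sqrt hc0.le
  have hrt : Real.sqrt c ≤ t := Real.sqrt_le_sqrt (by nlinarith)
  -- t - s ≤ √c
  have hts2 : t - s ≤ Real.sqrt c := by nlinarith [mul_nonneg hs.le hr]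
  -- 1/(2s) - 1/(2t) ≤ u ^ (-1/2)
  have hsu : Real.sqrt u ≤ s := Real.sqrt_le_sqrt (by nlinarith)
  have hu2 : (0:ℝ) < Real.sqrt u := Real.sqrt_pos.mpr hu'
  have hurw : u ^ (-(1:ℝ)/2) = 1 / Real.sqrt u := by
    rw [Real.sqrt_eq_rpow, show (-(1:ℝ)/2 : ℝ) = -(1/2) by norm_num, Real.rpow_neg hu'.le]
    exact (one_div _).symm
  have hinv : 1/(2*s) - 1/(2*t) ≤ u ^ (-(1:ℝ)/2) := by
    rw [hurw]
    have h1 : 1/(2*s) ≤ 1/Real.sqrt u := by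
      rw [div_le_div_iff₀ (by positivity) hu2]
      nlinarith
    have h2 : (0:ℝ) ≤ 1/(2*t) := by positivity
    linarith
  have hnn : 0 ≤ (t - s) - (1/(2*t) - 1/(2*s)) := by
    have : 1/(2*t) ≤ 1/(2*s) := by
      rw [div_le_div_iff₀ (by positivity) (by positivity)]
      nlinarith
    linarith
  rw [Real.norm_eq_abs, Real.norm_eq_abs, abs_of_nonneg (mul_nonneg (Real.exp_pos _).le hnn)]
  have hexp : (0:ℝ) < Real.exp (-u) := Real.exp_pos _
  calc Real.exp (-u) * ((t - s) - (1/(2*t) - 1/(2*s)))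
      ≤ Real.exp (-u) * (Real.sqrt c + u ^ (-(1:ℝ)/2)) := by
        apply mul_le_mul_of_nonneg_left _ hexp.le
        linarith
    _ = Real.sqrt c * Real.exp (-u) + Real.exp (-u) * u ^ (-(1:ℝ)/2) := by ring
    _ ≤ |Real.sqrt c * Real.exp (-u) + Real.exp (-u) * u ^ (-(1:ℝ)/2)| := le_abs_self _

lemma integral_aux (x c : ℝ) (hc : 1 ≤ c) :
    ∫ u in Ioi (0:ℝ), Real.exp (-u) * ((Real.sqrt (x^2+u+c) - Real.sqrt (x^2+u))
      - (1/(2*Real.sqrt (x^2+u+c)) - 1/(2*Real.sqrt (x^2+u))))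
      = Real.sqrt (x^2+c) - |x| := by
  have hc0 : (0:ℝ) < c := by linarith
  have hcont : ContinuousWithinAt
      (fun v : ℝ => -(Real.exp (-v) * (Real.sqrt (x^2+v+c) - Real.sqrt (x^2+v)))) (Ici 0) 0 := by
    apply Continuous.continuousWithinAt
    fun_prop
  have htend : Tendsto
      (fun v : ℝ => -(Real.exp (-v) * (Real.sqrt (x^2+v+c) - Real.sqrt (x^2+v))))
      atTop (𝓝 0) := by
    rw [show (0:ℝ) = -0 by norm_num]
    apply Tendsto.neg
    apply squeeze_zero' (g := fun v : ℝ => Real.exp (-v) * (x^2+v+c))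
    · filter_upwards [eventually_ge_atTop (0:ℝ)] with v hv
      have : Real.sqrt (x^2+v) ≤ Real.sqrt (x^2+v+c) := Real.sqrt_le_sqrt (by linarith)
      have := (Real.exp_pos (-v)).le
      nlinarith
    · filter_upwards [eventually_ge_atTop (0:ℝ)] with v hv
      have h1 : Real.sqrt (x^2+v+c) ≤ x^2+v+c := by
        rw [Real.sqrt_le_left (by positivity)]
        nlinarith [sq_nonneg x]
      have h2 : (0:ℝ) ≤ Real.sqrt (x^2+v) := Real.sqrt_nonneg _
      have := (Real.exp_pos (-v)).le
      nlinarith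
    · have t1 : Tendsto (fun v : ℝ => (x^2+c) * Real.exp (-v)) atTop (𝓝 0) := by
        simpa using (Real.tendsto_exp_neg_atTop_nhds_zero).const_mul (x^2+c)
      have t2 : Tendsto (fun v : ℝ => v * Real.exp (-v)) atTop (𝓝 0) := by
        simpa using Real.tendsto_pow_mul_exp_neg_atTop_nhds_zero 1
      have := t1.add t2
      rw [add_zero] at this
      apply this.congr
      intro v
      ring
  have h := integral_Ioi_of_hasDerivAt_of_tendsto hcont
      (fun u hu => hasDerivAt_aux x c u hu hc0) (integrable_aux x c hc) htend
  rw [h]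
  rw [show Real.sqrt (x^2+0+c) = Real.sqrt (x^2+c) by norm_num]
  rw [show Real.sqrt (x^2+0) = |x| by rw [add_zero, Real.sqrt_sq_eq_abs]]
  simp

lemma V0_lower (x : ℝ) : Real.sqrt (x^2+2) - |x| ≤ V0 x := by
  rw [V0, ← integral_aux x 2 (by norm_num)]
  apply setIntegral_mono_on (integrable_aux x 2 (by norm_num)) (integrableOn_V0 x)
    measurableSet_Ioi
  intro u hu
  have hu' : (0:ℝ) < u := hu
  have hA : (0:ℝ) < x^2+u := by positivity
  have hAc : (0:ℝ) < x^2+u+2 := by positivity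
  set s := Real.sqrt (x^2+u) with hs_def
  set t := Real.sqrt (x^2+u+2) with ht_def
  have hs : 0 < s := Real.sqrt_pos.mpr hA
  have ht : 0 < t := Real.sqrt_pos.mpr hAc
  have hs2 : s^2 = x^2+u := Real.sq_sqrt hA.le
  have ht2 : t^2 = x^2+u+2 := Real.sq_sqrt hAc.le
  have hprod : ((2*(x^2+u)+1)*t - (2*(x^2+u)+3)*s)*((2*(x^2+u)+1)*t + (2*(x^2+u)+3)*s)
      = 2 := by
    linear_combination ((2*(x^2+u)+1)^2)*ht2 - ((2*(x^2+u)+3)^2)*hs2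
  have h1 : (0:ℝ) < 2*(x^2+u)+1 := by linarith
  have h3 : (0:ℝ) < 2*(x^2+u)+3 := by linarith
  have hsum : 0 < (2*(x^2+u)+1)*t + (2*(x^2+u)+3)*s := by
    have := mul_pos h1 ht
    have := mul_pos h3 hs
    linarith
  have key : (2*(x^2+u)+3)*s ≤ (2*(x^2+u)+1)*t := by nlinarith [hprod, hsum]
  have hfrac : (t - s) - (1/(2*t) - 1/(2*s)) ≤ 1/s := by
    have e1 : (t - s) - (1/(2*t) - 1/(2*s)) = (2*s*t*(t-s) + t - s)/(2*s*t) := by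
      field_simp
      ring
    have e2 : (1:ℝ)/s = (2*t)/(2*s*t) := by
      field_simp
    rw [e1, e2]
    have hnum : 2*s*t*(t-s) + t - s = (2*(x^2+u)+3)*s - (2*(x^2+u)+1)*t + 2*t := by
      linear_combination (2*s)*ht2 - (2*t)*hs2
    have hle : 2*s*t*(t-s) + t - s ≤ 2*t := by rw [hnum]; linarith [key]
    have hd : (0:ℝ) < 2*s*t := by positivity
    exact (div_le_div_iff_of_pos_right hd).mpr hle
  calc Real.exp (-u) * ((t - s) - (1/(2*t) - 1/(2*s)))
      ≤ Real.exp (-u) * (1/s) := mul_le_mul_of_nonneg_left hfrac (Real.exp_pos _).le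
    _ = Real.exp (-u) / s := by rw [mul_one_div]

lemma V0_upper (x : ℝ) : V0 x ≤ 2*(Real.sqrt (x^2+1) - |x|) := by
  have hint := integrable_aux x 1 le_rfl
  have hmono : V0 x ≤ ∫ u in Ioi (0:ℝ),
      2 * (Real.exp (-u) * ((Real.sqrt (x^2+u+1) - Real.sqrt (x^2+u))
        - (1/(2*Real.sqrt (x^2+u+1)) - 1/(2*Real.sqrt (x^2+u))))) := by
    rw [V0]
    apply setIntegral_mono_on (integrableOn_V0 x) (hint.const_mul 2) measurableSet_Ioi
    intro u hu
    have hu' : (0:ℝ) < u := hu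
    have hA : (0:ℝ) < x^2+u := by positivity
    have hAc : (0:ℝ) < x^2+u+1 := by positivity
    set s := Real.sqrt (x^2+u) with hs_def
    set t := Real.sqrt (x^2+u+1) with ht_def
    have hs : 0 < s := Real.sqrt_pos.mpr hA
    have ht : 0 < t := Real.sqrt_pos.mpr hAc
    have hs2 : s^2 = x^2+u := Real.sq_sqrt hA.le
    have ht2 : t^2 = x^2+u+1 := Real.sq_sqrt hAc.le
    have h2st : 2*s*t ≤ 2*(x^2+u)+1 := by nlinarith [sq_nonneg (t-s)]
    have h1t : 1/t ≤ 2*(t-s) := by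
      rw [div_le_iff₀ ht]
      nlinarith
    have hexpand : 2*((t - s) - (1/(2*t) - 1/(2*s))) = 2*(t-s) - 1/t + 1/s := by
      field_simp
      ring
    have hfrac : 1/s ≤ 2*((t - s) - (1/(2*t) - 1/(2*s))) := by
      rw [hexpand]; linarith
    calc Real.exp (-u) / s = Real.exp (-u) * (1/s) := by rw [mul_one_div]
      _ ≤ Real.exp (-u) * (2*((t - s) - (1/(2*t) - 1/(2*s)))) :=
          mul_le_mul_of_nonneg_left hfrac (Real.exp_pos _).le
      _ = 2 * (Real.exp (-u) * ((t - s) - (1/(2*t) - 1/(2*s)))) := by ring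
  rw [MeasureTheory.integral_const_mul, integral_aux x 1 le_rfl] at hmono
  exact hmono

lemma V0_pos (x : ℝ) : 0 < V0 x := by
  have h := V0_lower x
  have : |x| < Real.sqrt (x^2+2) := by
    rw [← Real.sqrt_sq_eq_abs]
    exact Real.sqrt_lt_sqrt (sq_nonneg x) (by linarith)
  linarith

set_option maxHeartbeats 1000000 in
theorem V0_triangle_ineq : ∀ w x : ℝ,
    (1 / Real.sqrt 2) * V0 (|w - x| / Real.sqrt 2) * (1 / V0 w + 1 / V0 x) ≥ 1 := by
  intro w x
  set a := |w| with ha_def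
  set b := |x| with hb_def
  have ha : 0 ≤ a := abs_nonneg w
  have hb : 0 ≤ b := abs_nonneg x
  have ha2 : a^2 = w^2 := sq_abs w
  have hb2 : b^2 = x^2 := sq_abs x
  set sa := Real.sqrt (a^2+1) with hsa_def
  set sb := Real.sqrt (b^2+1) with hsb_def
  have hsa0 : 0 ≤ sa := Real.sqrt_nonneg _
  have hsb0 : 0 ≤ sb := Real.sqrt_nonneg _
  have hsa2 : sa^2 = a^2+1 := Real.sq_sqrt (by positivity)
  have hsb2 : sb^2 = b^2+1 := Real.sq_sqrt (by positivity)
  have hsa_gt : a < sa := by nlinarith [hsa2, hsa0, ha]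
  have hsb_gt : b < sb := by nlinarith [hsb2, hsb0, hb]
  have hVw : 0 < V0 w := V0_pos w
  have hVx : 0 < V0 x := V0_pos x
  -- reciprocal lower bounds
  have h1w : (sa + a)/2 ≤ 1 / V0 w := by
    have hub : V0 w ≤ 2*(sa - a) := by
      have h := V0_upper w
      rw [hsa_def, ha2]
      exact h
    have hrec : 1/(2*(sa - a)) ≤ 1 / V0 w := one_div_le_one_div_of_le hVw hub
    have hid : 1/(2*(sa - a)) = (sa + a)/2 := by
      rw [div_eq_div_iff (by linarith) (by norm_num)]
      linear_combination (-2)*hsa2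
    linarith [hid ▸ hrec]
  have h1x : (sb + b)/2 ≤ 1 / V0 x := by
    have hub : V0 x ≤ 2*(sb - b) := by
      have h := V0_upper x
      rw [hsb_def, hb2]
      exact h
    have hrec : 1/(2*(sb - b)) ≤ 1 / V0 x := one_div_le_one_div_of_le hVx hub
    have hid : 1/(2*(sb - b)) = (sb + b)/2 := by
      rw [div_eq_div_iff (by linarith) (by norm_num)]
      linear_combination (-2)*hsb2
    linarith [hid ▸ hrec]
  -- lower bound on the first factor
  set d := |w - x| with hd_def
  have hd0 : 0 ≤ d := abs_nonneg _
  have hs2pos : (0:ℝ) < Real.sqrt 2 := Real.sqrt_pos.mpr (by norm_num)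
  set c := d / Real.sqrt 2 with hc_def
  have hc0 : 0 ≤ c := by positivity
  have hlow := V0_lower c
  rw [abs_of_nonneg hc0] at hlow
  have hc2 : c^2 = d^2/2 := by
    rw [hc_def, div_pow, Real.sq_sqrt (by norm_num : (0:ℝ) ≤ 2)]
  set e := Real.sqrt (d^2+4) with he_def
  have he2 : e^2 = d^2+4 := Real.sq_sqrt (by positivity)
  have hde : d ≤ e := by
    have h := Real.sqrt_le_sqrt (show d^2 ≤ d^2+4 by linarith)
    rwa [Real.sqrt_sq hd0] at h
  have hsq : Real.sqrt (c^2+2) = e / Real.sqrt 2 := by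
    rw [hc2, show d^2/2 + 2 = (d^2+4)/2 by ring, Real.sqrt_div (by positivity) 2]
  have h22 : Real.sqrt 2 * Real.sqrt 2 = 2 := Real.mul_self_sqrt (by norm_num)
  have hP : (e - d)/2 ≤ (1/Real.sqrt 2) * V0 c := by
    have hmul : (1/Real.sqrt 2) * (Real.sqrt (c^2+2) - c) ≤ (1/Real.sqrt 2) * V0 c :=
      mul_le_mul_of_nonneg_left hlow (by positivity)
    have hidP : (1/Real.sqrt 2) * (Real.sqrt (c^2+2) - c) = (e - d)/2 := by
      rw [hsq, hc_def, ← sub_div, one_div, inv_mul_eq_div, div_div, h22]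
    linarith [hidP ▸ hmul]
  -- key algebraic inequality
  have hsab : a*b + 1 ≤ sa*sb := by
    calc a*b+1 = Real.sqrt ((a*b+1)^2) := (Real.sqrt_sq (by positivity)).symm
      _ ≤ Real.sqrt ((a^2+1)*(b^2+1)) := Real.sqrt_le_sqrt (by nlinarith [sq_nonneg (a-b)])
      _ = sa*sb := Real.sqrt_mul (by positivity) _
  have hkey : Real.sqrt ((a+b)^2+4) ≤ sa + sb := by
    calc Real.sqrt ((a+b)^2+4) ≤ Real.sqrt ((sa+sb)^2) :=
          Real.sqrt_le_sqrt (by nlinarith [hsab, hsa2, hsb2])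
      _ = sa+sb := Real.sqrt_sq (add_nonneg hsa0 hsb0)
  have hdab : d ≤ a + b := abs_sub w x
  have he_le : e ≤ Real.sqrt ((a+b)^2+4) := Real.sqrt_le_sqrt (by nlinarith)
  have hsum : e + d ≤ sa + sb + (a+b) := by linarith
  -- finish
  have h4 : (e - d)*(e + d) = 4 := by linear_combination he2
  have hstep : (e - d)*(e + d) ≤ (e - d)*(sa + sb + (a+b)) :=
    mul_le_mul_of_nonneg_left hsum (by linarith)
  have hfinal : 1 ≤ (e - d)/2 * ((sa+a)/2 + (sb+b)/2) := by
    have hrw : (e - d)/2 * ((sa+a)/2 + (sb+b)/2) = (e - d)*(sa + sb + (a+b))/4 := by ring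
    rw [hrw]
    linarith
  have hQ0 : 0 ≤ (sa+a)/2 + (sb+b)/2 := by positivity
  have hPnn : 0 ≤ (1/Real.sqrt 2) * V0 c :=
    mul_nonneg (by positivity) (V0_pos c).le
  have hgoal : (e - d)/2 * ((sa+a)/2 + (sb+b)/2)
      ≤ (1/Real.sqrt 2) * V0 c * (1/V0 w + 1/V0 x) :=
    mul_le_mul hP (by linarith) hQ0 hPnn
  linarith [hfinal, hgoal]
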